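/- Let a : ℕ → ℕ → ℝ and ε > 0 be such that the double series ∑_{i,j} |a i j| ε^{i+j} converges, and define G(r,s) = ∑_{i,j} a i j · r^i · s^j for |r|, |s| < ε. Suppose that G(r, 0) = G(-r, r) for all real r with |r| < ε. Let k ∈ ℕ and suppose that a i j = 0 whenever i ≤ 2k and j ≥ 1. Then a (2k+1) 0 = 0. (This is the analytic core of Vanhecke's lemma: if the volume density coefficients a_0, …, a_{2k} are constant along geodesics, then the symmetry of the volume density under the geodesic involution forces the (2k+1)-st coefficient at the base point to vanish.) -/

import Mathlib

open Finset
open scoped ENNReal NNReal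

lemma summable_antidiagonal_of_summable (F : ℕ × ℕ → ℝ) (hF : Summable F) :
    Summable fun n => ∑ kl ∈ Finset.HasAntidiagonal.antidiagonal n, F kl := by
  have h := Finset.HasAntidiagonal.sigmaAntidiagonalEquivProd.summable_iff.mpr hF
  refine (h.sigma' fun n => (hasSum_fintype _).summable).congr fun n => ?_
  rw [tsum_fintype]
  exact Finset.sum_coe_sort _ _

lemma tsum_eq_tsum_antidiagonal (F : ℕ × ℕ → ℝ) (hF : Summable F) :
    ∑' p : ℕ × ℕ, F p = ∑' n : ℕ, ∑ kl ∈ Finset.HasAntidiagonal.antidiagonal n, F kl := by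
  have hg : Summable (F ∘ ⇑Finset.HasAntidiagonal.sigmaAntidiagonalEquivProd) :=
    Finset.HasAntidiagonal.sigmaAntidiagonalEquivProd.summable_iff.mpr hF
  calc ∑' p : ℕ × ℕ, F p
      = ∑' x : Σ n : ℕ, Finset.HasAntidiagonal.antidiagonal n, (F ∘ ⇑Finset.HasAntidiagonal.sigmaAntidiagonalEquivProd) x :=
        (Finset.HasAntidiagonal.sigmaAntidiagonalEquivProd.tsum_eq F).symm
    _ = ∑' (n : ℕ) (kl : Finset.HasAntidiagonal.antidiagonal n),
          (F ∘ ⇑Finset.HasAntidiagonal.sigmaAntidiagonalEquivProd) ⟨n, kl⟩ :=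
        Summable.tsum_sigma' (fun n => (hasSum_fintype _).summable) hg
    _ = ∑' n : ℕ, ∑ kl ∈ Finset.HasAntidiagonal.antidiagonal n, F kl := by
        refine tsum_congr fun n => ?_
        rw [tsum_fintype]
        exact Finset.sum_coe_sort _ _

/-- Uniqueness of power series coefficients: if `∑ c n x^n = 0` on `|x| < ε` then `c = 0`. -/
lemma coeffs_eq_zero (c : ℕ → ℝ) (ε : ℝ) (hε : 0 < ε)
    (hs : Summable fun n => |c n| * ε ^ n)
    (h : ∀ x : ℝ, |x| < ε → ∑' n : ℕ, c n * x ^ n = 0) : ∀ n, c n = 0 := by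
  set p := FormalMultilinearSeries.ofScalars ℝ c with hp
  have hεnn : ((ε.toNNReal : ℝ)) = ε := Real.coe_toNNReal ε hε.le
  have hnorm : ∀ n, ‖p n‖ ≤ |c n| := by
    intro n
    have h1 : p n = c n • ContinuousMultilinearMap.mkPiAlgebraFin ℝ n ℝ := rfl
    rw [h1]
    refine (norm_smul_le (c n) (ContinuousMultilinearMap.mkPiAlgebraFin ℝ n ℝ)).trans ?_
    simp [ContinuousMultilinearMap.norm_mkPiAlgebraFin]
  have hrad : (ε.toNNReal : ℝ≥0∞) ≤ p.radius := by
    refine p.le_radius_of_summable_norm ?_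
    refine Summable.of_nonneg_of_le (fun n => by positivity) (fun n => ?_) hs
    rw [hεnn]
    exact mul_le_mul_of_nonneg_right (hnorm n) (by positivity)
  have hball : HasFPowerSeriesOnBall (0 : ℝ → ℝ) p 0 ε.toNNReal := by
    refine ⟨hrad, by simpa using hε, ?_⟩
    intro y hy
    rw [Metric.emetric_ball_nnreal, Metric.mem_ball, dist_zero_right, hεnn,
      Real.norm_eq_abs] at hy
    have hsy : Summable fun n => c n * y ^ n := by
      refine Summable.of_norm (Summable.of_nonneg_of_le (fun n => by positivity)
        (fun n => ?_) hs)
      rw [norm_mul, norm_pow, Real.norm_eq_abs, Real.norm_eq_abs]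
      exact mul_le_mul_of_nonneg_left (pow_le_pow_left₀ (abs_nonneg y) hy.le n) (abs_nonneg _)
    have hhs := hsy.hasSum
    rw [h y hy] at hhs
    have heq : (fun n => p n fun _ => y) = fun n => c n * y ^ n := by
      funext n
      rw [hp, FormalMultilinearSeries.ofScalars_apply_eq, smul_eq_mul]
    rw [Pi.zero_apply, heq]
    exact hhs
  have hz : p = 0 := HasFPowerSeriesAt.eq_zero ⟨_, hball⟩
  intro n
  exact (FormalMultilinearSeries.ofScalars_eq_zero ℝ n).mp (by rw [← hp, hz]; rfl)


/-- **Analytic core of Vanhecke's lemma.**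
Let `a : ℕ → ℕ → ℝ` with `∑_{i,j} |a i j| ε^(i+j) < ∞` for some `ε > 0`, and set
`G (r, s) = ∑_{i,j} a i j r^i s^j` on the polydisc `|r|, |s| < ε`.  Assume the
symmetry `G (r, 0) = G (-r, r)` for all `|r| < ε`, and that `a i j = 0` whenever
`i ≤ 2k` and `j ≥ 1`.  Then `a (2k+1) 0 = 0`. -/
theorem vanhecke_core (a : ℕ → ℕ → ℝ) (ε : ℝ) (hε : 0 < ε)
    (hsum : Summable (fun p : ℕ × ℕ => |a p.1 p.2| * ε ^ (p.1 + p.2)))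
    (G : ℝ → ℝ → ℝ)
    (hG : ∀ r s : ℝ, |r| < ε → |s| < ε →
      G r s = ∑' p : ℕ × ℕ, a p.1 p.2 * r ^ p.1 * s ^ p.2)
    (hsym : ∀ r : ℝ, |r| < ε → G r 0 = G (-r) r)
    (k : ℕ)
    (hvanish : ∀ i j : ℕ, i ≤ 2 * k → 1 ≤ j → a i j = 0) :
    a (2 * k + 1) 0 = 0 := by
  set d : ℕ × ℕ → ℝ :=
    fun p => a p.1 p.2 * ((if p.2 = 0 then (1 : ℝ) else 0) - (-1) ^ p.1) with hd
  set c : ℕ → ℝ := fun n => ∑ kl ∈ Finset.HasAntidiagonal.antidiagonal n, d kl with hc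
  have hd2 : ∀ p : ℕ × ℕ, |d p| ≤ 2 * |a p.1 p.2| := by
    intro p
    rw [hd]
    simp only
    rw [abs_mul]
    have h1 : |(if p.2 = 0 then (1 : ℝ) else 0) - (-1) ^ p.1| ≤ 2 := by
      have hb : |(if p.2 = 0 then (1 : ℝ) else 0)| ≤ 1 := by split <;> norm_num
      have hb2 : |((-1 : ℝ)) ^ p.1| ≤ 1 := by rw [abs_pow]; norm_num
      calc |(if p.2 = 0 then (1 : ℝ) else 0) - (-1) ^ p.1|
          ≤ |(if p.2 = 0 then (1 : ℝ) else 0)| + |((-1 : ℝ)) ^ p.1| := abs_sub _ _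
        _ ≤ 2 := by linarith
    calc |a p.1 p.2| * |(if p.2 = 0 then (1 : ℝ) else 0) - (-1) ^ p.1|
        ≤ |a p.1 p.2| * 2 := mul_le_mul_of_nonneg_left h1 (abs_nonneg _)
      _ = 2 * |a p.1 p.2| := by ring
  have hFsum : Summable fun p : ℕ × ℕ => 2 * |a p.1 p.2| * ε ^ (p.1 + p.2) := by
    simpa [mul_assoc] using hsum.mul_left 2
  have hcsum : Summable fun n => |c n| * ε ^ n := by
    refine Summable.of_nonneg_of_le (fun n => by positivity) (fun n => ?_)
      (summable_antidiagonal_of_summable _ hFsum)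
    calc |c n| * ε ^ n ≤ (∑ kl ∈ Finset.HasAntidiagonal.antidiagonal n, |d kl|) * ε ^ n := by
          exact mul_le_mul_of_nonneg_right (Finset.abs_sum_le_sum_abs _ _) (by positivity)
      _ = ∑ kl ∈ Finset.HasAntidiagonal.antidiagonal n, |d kl| * ε ^ n := Finset.sum_mul _ _ _
      _ ≤ ∑ kl ∈ Finset.HasAntidiagonal.antidiagonal n, 2 * |a kl.1 kl.2| * ε ^ (kl.1 + kl.2) := by
          refine Finset.sum_le_sum fun kl hkl => ?_
          rw [Finset.HasAntidiagonal.mem_antidiagonal.mp hkl]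
          exact mul_le_mul_of_nonneg_right (hd2 kl) (by positivity)
  have key : ∀ u v : ℝ, |u| < ε → |v| < ε →
      Summable fun p : ℕ × ℕ => a p.1 p.2 * u ^ p.1 * v ^ p.2 := by
    intro u v hu hv
    refine Summable.of_norm (Summable.of_nonneg_of_le (fun p => norm_nonneg _)
      (fun p => ?_) hsum)
    rw [norm_mul, norm_mul, norm_pow, norm_pow, Real.norm_eq_abs, Real.norm_eq_abs,
      Real.norm_eq_abs, pow_add, mul_assoc]
    refine mul_le_mul_of_nonneg_left ?_ (abs_nonneg _)
    exact mul_le_mul (pow_le_pow_left₀ (abs_nonneg u) hu.le _)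
      (pow_le_pow_left₀ (abs_nonneg v) hv.le _) (by positivity) (by positivity)
  have hzero : ∀ r : ℝ, |r| < ε → ∑' n : ℕ, c n * r ^ n = 0 := by
    intro r hr
    have h0 : |(0 : ℝ)| < ε := by simpa using hε
    have hnr : |(-r)| < ε := by simpa using hr
    have hsub : ∑' p : ℕ × ℕ,
        (a p.1 p.2 * r ^ p.1 * (0 : ℝ) ^ p.2 - a p.1 p.2 * (-r) ^ p.1 * r ^ p.2) = 0 := by
      rw [Summable.tsum_sub (key r 0 hr h0) (key (-r) r hnr hr), ← hG r 0 hr h0,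
        ← hG (-r) r hnr hr, hsym r hr, sub_self]
    have hfun : ∀ p : ℕ × ℕ,
        a p.1 p.2 * r ^ p.1 * (0 : ℝ) ^ p.2 - a p.1 p.2 * (-r) ^ p.1 * r ^ p.2
          = d p * r ^ (p.1 + p.2) := by
      intro p
      rw [hd]
      simp only
      by_cases hp2 : p.2 = 0
      · rw [hp2, if_pos rfl, pow_zero, pow_zero, mul_one, mul_one, neg_pow, Nat.add_zero]
        ring
      · rw [if_neg hp2, zero_pow hp2, mul_zero, neg_pow, pow_add]
        ring
    rw [tsum_congr hfun] at hsub
    have hsd : Summable fun p : ℕ × ℕ => d p * r ^ (p.1 + p.2) := by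
      refine Summable.of_norm (Summable.of_nonneg_of_le (fun p => norm_nonneg _)
        (fun p => ?_) hFsum)
      rw [norm_mul, norm_pow, Real.norm_eq_abs, Real.norm_eq_abs]
      exact mul_le_mul (hd2 p) (pow_le_pow_left₀ (abs_nonneg r) hr.le _)
        (by positivity) (by positivity)
    rw [tsum_eq_tsum_antidiagonal _ hsd] at hsub
    have hgroup : ∀ n : ℕ,
        ∑ kl ∈ Finset.HasAntidiagonal.antidiagonal n, d kl * r ^ (kl.1 + kl.2) = c n * r ^ n := by
      intro n
      rw [hc]
      simp only
      rw [Finset.sum_mul]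
      exact Finset.sum_congr rfl fun kl hkl => by rw [Finset.HasAntidiagonal.mem_antidiagonal.mp hkl]
    rw [tsum_congr hgroup] at hsub
    exact hsub
  have hcz := coeffs_eq_zero c ε hε hcsum hzero (2 * k + 1)
  rw [hc] at hcz
  simp only at hcz
  have hsingle : ∑ kl ∈ Finset.HasAntidiagonal.antidiagonal (2 * k + 1), d kl = d (2 * k + 1, 0) := by
    refine Finset.sum_eq_single _ (fun kl hkl hne => ?_) (fun habs =>
      absurd (Finset.HasAntidiagonal.mem_antidiagonal.mpr (by simp)) habs)
    have hm := Finset.HasAntidiagonal.mem_antidiagonal.mp hkl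
    have h2 : 1 ≤ kl.2 := by
      rcases Nat.eq_zero_or_pos kl.2 with h | h
      · exact absurd (Prod.ext (by omega) h) hne
      · exact h
    rw [hd]
    simp only
    rw [hvanish kl.1 kl.2 (by omega) h2, zero_mul]
  rw [hsingle, hd] at hcz
  simp only at hcz
  have hodd : ((-1 : ℝ)) ^ (2 * k + 1) = -1 := Odd.neg_one_pow ⟨k, by ring⟩
  rw [hodd] at hcz
  norm_num at hcz
  linarith
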